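/- Let β > 0 and let {ε_k}_{k∈ℕ} be nonnegative reals with ε_k → 0. Let {x^k} ⊆ ℝ^n be a sequence satisfying the inexact relative error condition (H2°): for each k, there exists w^{k+1} ∈ ℝ^n with w^{k+1}_i = 2(Aᵀ(Ax^{k+1} − b))_i + λp|x^{k+1}_i|^{p−1}sign(x^{k+1}_i) for every i ∈ supp(x^{k+1}) and ‖w^{k+1}‖ ≤ β‖x^{k+1} − x^k‖ + ε_k. Suppose {x^k} converges to x* ∈ ℝ^n. Then there exists N ∈ ℕ such that supp(x^k) = supp(x*) for each k ≥ N. -/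

import Mathlib

open scoped RealInnerProductSpace

/-- Proposition 4.1(ii): if `β > 0`, `ε_k → 0`, the sequence `{x^k}` satisfies
the inexact relative error condition (H2°) — for each `k` there is `w^{k+1}` whose components on
`supp(x^{k+1})` are the partial derivatives `2(Aᵀ(Ax^{k+1} - b))_i + λ p |x^{k+1}_i|^{p-1}
sign(x^{k+1}_i)` and `‖w^{k+1}‖ ≤ β ‖x^{k+1} - x^k‖ + ε_k` — and `x^k → x*`, then there is `N`
with `supp(x^k) = supp(x*)` for all `k ≥ N`. -/
theorem stmt7 (n m : ℕ) (p lam : ℝ) (hp0 : 0 < p) (hp1 : p < 1) (hlam : 0 < lam)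
    (A : EuclideanSpace ℝ (Fin n) →L[ℝ] EuclideanSpace ℝ (Fin m))
    (b : EuclideanSpace ℝ (Fin m))
    (β : ℝ) (hβ : 0 < β) (ε : ℕ → ℝ) (hε : ∀ k, 0 ≤ ε k)
    (hε0 : Filter.Tendsto ε Filter.atTop (nhds 0))
    (x : ℕ → EuclideanSpace ℝ (Fin n))
    (hH2 : ∀ k, ∃ w : EuclideanSpace ℝ (Fin n),
      (∀ i, x (k + 1) i ≠ 0 →
        w i = 2 * ⟪A (EuclideanSpace.single i 1), A (x (k + 1)) - b⟫
          + lam * p * |x (k + 1) i| ^ (p - 1) * Real.sign (x (k + 1) i)) ∧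
      ‖w‖ ≤ β * ‖x (k + 1) - x k‖ + ε k)
    (xs : EuclideanSpace ℝ (Fin n))
    (hconv : Filter.Tendsto x Filter.atTop (nhds xs)) :
    ∃ N : ℕ, ∀ k ≥ N, {i : Fin n | x k i ≠ 0} = {i : Fin n | xs i ≠ 0} := by
  -- the shifted sequence also converges
  have h1 : Filter.Tendsto (fun k => x (k + 1)) Filter.atTop (nhds xs) :=
    hconv.comp (Filter.tendsto_add_atTop_nat 1)
  -- the successive differences tend to 0 in norm
  have hdiff : Filter.Tendsto (fun k => ‖x (k + 1) - x k‖) Filter.atTop (nhds 0) := by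
    have := (h1.sub hconv).norm
    simpa using this
  -- the bound on w tends to 0
  have hwb : Filter.Tendsto (fun k => β * ‖x (k + 1) - x k‖ + ε k) Filter.atTop (nhds 0) := by
    have := (hdiff.const_mul β).add hε0
    simpa using this
  have E2 : ∀ᶠ k in Filter.atTop, β * ‖x (k + 1) - x k‖ + ε k ≤ 1 :=
    (hwb.eventually_lt_const zero_lt_one).mono fun k hk => hk.le
  -- componentwise convergence
  have hcomp : ∀ i : Fin n, Filter.Tendsto (fun k => x k i) Filter.atTop (nhds (xs i)) := by
    intro i
    have := ((EuclideanSpace.proj (𝕜 := ℝ) i).continuous.tendsto xs).comp hconv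
    simpa [Function.comp_def] using this
  -- the key claim, componentwise eventual equality of support
  have key : ∀ i : Fin n, ∀ᶠ k in Filter.atTop, (x k i ≠ 0 ↔ xs i ≠ 0) := by
    intro i
    by_cases hxs : xs i = 0
    · -- show eventually x k i = 0
      -- the linear term converges
      set c : ℝ := 2 * ⟪A (EuclideanSpace.single i 1), A xs - b⟫ with hc
      have hterm : Filter.Tendsto
          (fun k => 2 * ⟪A (EuclideanSpace.single i 1), A (x (k + 1)) - b⟫)
          Filter.atTop (nhds c) := by
        have hA : Filter.Tendsto (fun k => A (x (k + 1)) - b) Filter.atTop (nhds (A xs - b)) :=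
          ((A.continuous.tendsto xs).comp h1).sub tendsto_const_nhds
        exact (Filter.Tendsto.inner tendsto_const_nhds hA).const_mul 2
      have E1 : ∀ᶠ k in Filter.atTop,
          |2 * ⟪A (EuclideanSpace.single i 1), A (x (k + 1)) - b⟫| ≤ |c| + 1 :=
        (hterm.abs.eventually_lt_const (by linarith [abs_nonneg c])).mono fun k hk => hk.le
      -- choose δ
      have hlp : 0 < lam * p := mul_pos hlam hp0
      set K : ℝ := (|c| + 3) / (lam * p) with hK
      have hKpos : 0 < K := div_pos (by linarith [abs_nonneg c]) hlp
      set δ : ℝ := K ^ (1 / (p - 1)) with hδ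
      have hδpos : 0 < δ := Real.rpow_pos_of_pos hKpos _
      have hδK : δ ^ (p - 1) = K := by
        rw [hδ, ← Real.rpow_mul hKpos.le,
          one_div_mul_cancel (by linarith : p - 1 ≠ 0), Real.rpow_one]
      have hcomp1 : Filter.Tendsto (fun k => |x (k + 1) i|) Filter.atTop (nhds 0) := by
        have := ((hcomp i).comp (Filter.tendsto_add_atTop_nat 1)).abs
        simpa [hxs] using this
      have E3 : ∀ᶠ k in Filter.atTop, |x (k + 1) i| ≤ δ :=
        (hcomp1.eventually_lt_const hδpos).mono fun k hk => hk.le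
      have main : ∀ᶠ k in Filter.atTop, x (k + 1) i = 0 := by
        filter_upwards [E1, E2, E3] with k hE1 hE2 hE3
        by_contra h0
        obtain ⟨w, hw, hwn⟩ := hH2 k
        have hwi := hw i h0
        set T : ℝ := 2 * ⟪A (EuclideanSpace.single i 1), A (x (k + 1)) - b⟫ with hT
        set S : ℝ := lam * p * |x (k + 1) i| ^ (p - 1) with hS
        -- S ≥ |c| + 3
        have habs : (0 : ℝ) < |x (k + 1) i| := abs_pos.mpr h0
        have hSge : |c| + 3 ≤ S := by
          have h1' : δ ^ (p - 1) ≤ |x (k + 1) i| ^ (p - 1) :=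
            Real.rpow_le_rpow_of_nonpos habs hE3 (by linarith)
          rw [hδK] at h1'
          have := mul_le_mul_of_nonneg_left h1' hlp.le
          rw [hK, mul_div_cancel₀ _ (ne_of_gt hlp)] at this
          exact this.trans_eq rfl
        -- |w i| ≤ ‖w‖ ≤ 1
        have hwi_le : |w i| ≤ 1 := by
          have h2' : |⟪EuclideanSpace.single i (1 : ℝ), w⟫| ≤
              ‖EuclideanSpace.single i (1 : ℝ)‖ * ‖w‖ := abs_real_inner_le_norm _ _
          rw [EuclideanSpace.inner_single_left, EuclideanSpace.norm_single] at h2'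
          simp only [norm_one, one_mul, starRingEnd_apply, star_one] at h2'
          calc |w i| ≤ ‖w‖ := h2'
            _ ≤ β * ‖x (k + 1) - x k‖ + ε k := hwn
            _ ≤ 1 := hE2
        -- |sign| = 1
        have hsign : |Real.sign (x (k + 1) i)| = 1 := by
          rcases Real.sign_apply_eq_of_ne_zero _ h0 with h | h <;> rw [h] <;> norm_num
        -- contradiction
        have hSval : S = |S * Real.sign (x (k + 1) i)| := by
          rw [abs_mul, hsign, mul_one, abs_of_pos (mul_pos hlp (Real.rpow_pos_of_pos habs _))]
        have : S ≤ |w i| + |T| := by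
          rw [hSval]
          have : S * Real.sign (x (k + 1) i) = w i - T := by rw [hwi]; ring
          rw [this]
          exact (abs_sub _ _).trans (le_refl _)
        linarith [hE1, hwi_le]
      -- from eventually x (k+1) i = 0, deduce eventually (x k i ≠ 0 ↔ xs i ≠ 0)
      obtain ⟨N, hN⟩ := Filter.eventually_atTop.mp main
      rw [Filter.eventually_atTop]
      refine ⟨N + 1, fun k hk => ?_⟩
      have hx0 : x k i = 0 := by
        obtain ⟨j, rfl⟩ : ∃ j, k = j + 1 := ⟨k - 1, by omega⟩
        exact hN j (by omega)
      simp [hx0, hxs]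
    · -- xs i ≠ 0 : eventually x k i ≠ 0
      have : ∀ᶠ k in Filter.atTop, |x k i - xs i| < |xs i| := by
        have := ((hcomp i).sub_const (xs i)).abs
        simp only [sub_self, abs_zero] at this
        exact this.eventually_lt_const (abs_pos.mpr hxs)
      filter_upwards [this] with k hk
      constructor
      · intro _; exact hxs
      · intro _ h0
        rw [h0, zero_sub, abs_neg] at hk
        exact lt_irrefl _ hk
  -- combine over all coordinates
  have hall : ∀ᶠ k in Filter.atTop, ∀ i : Fin n, (x k i ≠ 0 ↔ xs i ≠ 0) :=
    Filter.eventually_all.mpr key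
  obtain ⟨N, hN⟩ := Filter.eventually_atTop.mp hall
  refine ⟨N, fun k hk => ?_⟩
  ext i
  exact hN k hk i
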